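/- Let s > 0, let P satisfy H1, and let 0 < x₀ ≤ x₁. If γ₁ and γ₂ are two positive solutions of the Dyson–Schwinger ODE on [x₀, x₁], then for every x ∈ [x₀, x₁]: γ₁(x) − γ₂(x) = (γ₁(x₀) − γ₂(x₀)) · exp( ∫_{x₀}^x [ 1/(s·z) + P(z)/(s·z·γ₁(z)·γ₂(z)) ] dz ). In particular, if γ₂(x₀) < γ₁(x₀) then γ₂(x) < γ₁(x) for all x ∈ [x₀, x₁]. -/

import Mathlib

open Real MeasureTheory Filter Set

noncomputable section

/-- `γ` is a positive solution of the Dyson–Schwinger ODE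
`γ'(x) = (γ(x) + γ(x)² − P(x)) / (s·x·γ(x))` on the set `I`. -/
def IsDSSolution (s : ℝ) (P γ : ℝ → ℝ) (I : Set ℝ) : Prop :=
  (∀ x ∈ I, 0 < γ x) ∧
    ∀ x ∈ I, HasDerivWithinAt γ ((γ x + (γ x) ^ 2 - P x) / (s * x * γ x)) I x

/-- Hypothesis H1: `P` is twice continuously differentiable on `[0,∞)`,
`P 0 = 0`, and `P x > 0` for `x > 0`. -/
def H1 (P : ℝ → ℝ) : Prop :=
  ContDiffOn ℝ 2 P (Set.Ici 0) ∧ P 0 = 0 ∧ ∀ x > (0 : ℝ), 0 < P x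

/-- Hypothesis H2: `P` is strictly increasing on `[0,∞)`. -/
def H2 (P : ℝ → ℝ) : Prop := StrictMonoOn P (Set.Ici 0)

/-- The nullcline `γ_c(x) = (√(1 + 4 P x) − 1)/2`. -/
def gammaC (P : ℝ → ℝ) (x : ℝ) : ℝ := (Real.sqrt (1 + 4 * P x) - 1) / 2

theorem stmt_3 (s : ℝ) (hs : 0 < s) (P : ℝ → ℝ) (hP : H1 P) (x₀ x₁ : ℝ)
    (hx₀ : 0 < x₀) (hx₀₁ : x₀ ≤ x₁) (γ₁ γ₂ : ℝ → ℝ)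
    (hγ₁ : IsDSSolution s P γ₁ (Set.Icc x₀ x₁))
    (hγ₂ : IsDSSolution s P γ₂ (Set.Icc x₀ x₁)) :
    (∀ x ∈ Set.Icc x₀ x₁,
      γ₁ x - γ₂ x = (γ₁ x₀ - γ₂ x₀) *
        Real.exp (∫ z in x₀..x, 1 / (s * z) + P z / (s * z * γ₁ z * γ₂ z))) ∧
    (γ₂ x₀ < γ₁ x₀ → ∀ x ∈ Set.Icc x₀ x₁, γ₂ x < γ₁ x) := by
  obtain ⟨h₁pos, h₁d⟩ := hγ₁
  obtain ⟨h₂pos, h₂d⟩ := hγ₂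
  set I : Set ℝ := Set.Icc x₀ x₁ with hI
  have hIIci : I ⊆ Set.Ici (0 : ℝ) := fun z hz => le_of_lt (lt_of_lt_of_le hx₀ hz.1)
  have hzpos : ∀ z ∈ I, 0 < z := fun z hz => lt_of_lt_of_le hx₀ hz.1
  set g : ℝ → ℝ := fun z => 1 / (s * z) + P z / (s * z * γ₁ z * γ₂ z) with hg
  set G : ℝ → ℝ := fun x => ∫ z in x₀..x, g z with hGdef
  -- continuity of g on I
  have hcg : ContinuousOn g I := by
    have hc1 : ContinuousOn γ₁ I := fun z hz => (h₁d z hz).continuousWithinAt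
    have hc2 : ContinuousOn γ₂ I := fun z hz => (h₂d z hz).continuousWithinAt
    have hcP : ContinuousOn P I := (hP.1.continuousOn).mono hIIci
    apply ContinuousOn.add
    · exact continuousOn_const.div (continuousOn_const.mul continuousOn_id)
        (fun z hz => by have := hzpos z hz; positivity)
    · exact hcP.div (((continuousOn_const.mul continuousOn_id).mul hc1).mul hc2)
        (fun z hz => by
          have := hzpos z hz; have := h₁pos z hz; have := h₂pos z hz; positivity)
  -- derivative of G within I
  have hGd : ∀ x ∈ I, HasDerivWithinAt G (g x) I x := by
    intro x hx
    haveI : Fact (x ∈ Set.Icc x₀ x₁) := ⟨hx⟩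
    have hint : IntervalIntegrable g volume x₀ x := by
      apply ContinuousOn.intervalIntegrable
      apply hcg.mono
      rw [Set.uIcc_of_le hx.1]
      exact Set.Icc_subset_Icc le_rfl hx.2
    have hmeas : StronglyMeasurableAtFilter g (nhdsWithin x I) volume :=
      ⟨I, self_mem_nhdsWithin, hcg.aestronglyMeasurable measurableSet_Icc⟩
    exact intervalIntegral.integral_hasDerivWithinAt_right hint hmeas (hcg x hx)
  -- the key algebraic identity
  have key : ∀ x ∈ I,
      (γ₁ x + (γ₁ x) ^ 2 - P x) / (s * x * γ₁ x) - (γ₂ x + (γ₂ x) ^ 2 - P x) / (s * x * γ₂ x)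
        = g x * (γ₁ x - γ₂ x) := by
    intro x hx
    have hxp := hzpos x hx
    have h1 := h₁pos x hx
    have h2 := h₂pos x hx
    have hs' : s ≠ 0 := ne_of_gt hs
    have hx' : x ≠ 0 := ne_of_gt hxp
    have h1' : γ₁ x ≠ 0 := ne_of_gt h1
    have h2' : γ₂ x ≠ 0 := ne_of_gt h2
    simp only [hg]
    field_simp
    ring
  -- F := (γ₁ - γ₂) * exp(-G) is constant on I
  set F : ℝ → ℝ := fun x => (γ₁ x - γ₂ x) * Real.exp (-G x) with hF
  have hFd : ∀ x ∈ I, HasDerivWithinAt F 0 I x := by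
    intro x hx
    have hδ : HasDerivWithinAt (fun y => γ₁ y - γ₂ y)
        ((γ₁ x + (γ₁ x) ^ 2 - P x) / (s * x * γ₁ x)
          - (γ₂ x + (γ₂ x) ^ 2 - P x) / (s * x * γ₂ x)) I x :=
      (h₁d x hx).sub (h₂d x hx)
    have hE : HasDerivWithinAt (fun y => Real.exp (-G y))
        (Real.exp (-G x) * (-(g x))) I x :=
      by have := (Real.hasDerivAt_exp (-G x)).comp_hasDerivWithinAt x (hGd x hx).neg; exact this
    have := hδ.mul hE
    rw [key x hx] at this
    refine this.congr_deriv ?_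
    ring
  have hconst : ∀ x ∈ I, F x = F x₀ := by
    intro x hx
    have hx₀I : x₀ ∈ I := ⟨le_rfl, hx₀₁⟩
    have := Convex.norm_image_sub_le_of_norm_hasDerivWithin_le
      (f' := fun _ => (0 : ℝ)) (C := 0) hFd (fun y _ => by simp) (convex_Icc x₀ x₁) hx₀I hx
    simpa [sub_eq_zero] using this
  have hmain : ∀ x ∈ I, γ₁ x - γ₂ x = (γ₁ x₀ - γ₂ x₀) * Real.exp (G x) := by
    intro x hx
    have h := hconst x hx
    have hGx₀ : G x₀ = 0 := by simp [hGdef]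
    rw [hF] at h
    simp only [hGx₀, neg_zero, Real.exp_zero, mul_one] at h
    have := congrArg (· * Real.exp (G x)) h
    simpa [mul_assoc, ← Real.exp_add] using this
  refine ⟨hmain, fun hlt x hx => ?_⟩
  have := hmain x hx
  have hpos : 0 < (γ₁ x₀ - γ₂ x₀) * Real.exp (G x) :=
    mul_pos (sub_pos.mpr hlt) (Real.exp_pos _)
  linarith
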